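/- Let 1 ≤ s ≤ N, 1 ≤ k ≤ m and λ > 0, and suppose A ∈ ℂ^{m×N} satisfies the ℓ¹-robust null space property of order (s,k) with weight λ and constants ρ ∈ (0,1) and τ' > 0. Let x ∈ ℂ^N, c ∈ ℂ^m, y ∈ ℂ^m, ε > 0 satisfy ‖Ax + c − y‖₂ ≤ ε, let (x̂, ĉ) be a minimizer of ‖z‖₁ + λ‖d‖₁ subject to ‖Az + d − y‖₂ ≤ ε, and set v = x − x̂, e = c − ĉ. Then for any sets S ⊆ {1,…,N} with |S| ≤ s, T ⊆ {1,…,m} with |T| ≤ k, one has ‖v_{S^c}‖₁ + λ‖e_{T^c}‖₁ ≤ (2/(1−ρ))·(‖x_{S^c}‖₁ + λ‖c_{T^c}‖₁) + (2τ'/(1−ρ))·ε. -/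
import Mathlib


open Finset Matrix MeasureTheory

noncomputable def l1norm {n : ℕ} (x : Fin n → ℂ) : ℝ := ∑ i, ‖x i‖

noncomputable def l2norm {n : ℕ} (x : Fin n → ℂ) : ℝ := Real.sqrt (∑ i, ‖x i‖ ^ 2)

/-- The vector equal to `x` on `S` and zero elsewhere. -/
def restr {n : ℕ} (x : Fin n → ℂ) (S : Finset (Fin n)) : Fin n → ℂ :=
  fun i => if i ∈ S then x i else 0

/-- `x` has at most `s` nonzero entries. -/
def IsSparse {n : ℕ} (s : ℕ) (x : Fin n → ℂ) : Prop :=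
  ∃ S : Finset (Fin n), S.card ≤ s ∧ ∀ i ∉ S, x i = 0

/-- Best `s`-term approximation error of `x` in the `ℓ¹` norm. -/
noncomputable def sigma1 {n : ℕ} (s : ℕ) (x : Fin n → ℂ) : ℝ :=
  sInf {t : ℝ | ∃ z : Fin n → ℂ, IsSparse s z ∧ t = l1norm (x - z)}

/-- `η_{s,k}(λ) = (s + λ²k)/min{s, λ²k}`. -/
noncomputable def etaSK (s k : ℕ) (lam : ℝ) : ℝ :=
  ((s : ℝ) + lam ^ 2 * k) / min (s : ℝ) (lam ^ 2 * k)

/-- The ℓ¹-robust null space property of order (s,k) with weight lam, constants ρ, τ. -/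
def L1RNSP {m N : ℕ} (A : Matrix (Fin m) (Fin N) ℂ) (s k : ℕ) (lam ρ τ : ℝ) : Prop :=
  ∀ (x : Fin N → ℂ) (c : Fin m → ℂ) (S : Finset (Fin N)) (T : Finset (Fin m)),
    S.card ≤ s → T.card ≤ k →
      l1norm (restr x S) + lam * l1norm (restr c T) ≤
        ρ * (l1norm (restr x Sᶜ) + lam * l1norm (restr c Tᶜ)) + τ * l2norm (A.mulVec x + c)

/-- The ℓ²-robust null space property of order (s,k) with weight lam, constants ρ, τ. -/
def L2RNSP {m N : ℕ} (A : Matrix (Fin m) (Fin N) ℂ) (s k : ℕ) (lam ρ τ : ℝ) : Prop :=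
  ∀ (x : Fin N → ℂ) (c : Fin m → ℂ) (S : Finset (Fin N)) (T : Finset (Fin m)),
    S.card ≤ s → T.card ≤ k →
      Real.sqrt (l2norm (restr x S) ^ 2 + l2norm (restr c T) ^ 2) ≤
        (ρ / Real.sqrt ((s : ℝ) + lam ^ 2 * k)) *
            (l1norm (restr x Sᶜ) + lam * l1norm (restr c Tᶜ)) +
          τ * l2norm (A.mulVec x + c)

/-- `A` satisfies the two-sided RIP inequality for the sparse corruptions problem of
order `(s,k)` with constant `δ`. -/
def RIPCor {m N : ℕ} (A : Matrix (Fin m) (Fin N) ℂ) (s k : ℕ) (δ : ℝ) : Prop :=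
  ∀ (x : Fin N → ℂ) (c : Fin m → ℂ), IsSparse s x → IsSparse k c →
    (1 - δ) * (l2norm x ^ 2 + l2norm c ^ 2) ≤ l2norm (A.mulVec x + c) ^ 2 ∧
      l2norm (A.mulVec x + c) ^ 2 ≤ (1 + δ) * (l2norm x ^ 2 + l2norm c ^ 2)

/-- `A` satisfies the RIP inequality for sparse vectors of order `s` with constant `δ`. -/
def RIPSparse {m N : ℕ} (A : Matrix (Fin m) (Fin N) ℂ) (s : ℕ) (δ : ℝ) : Prop :=
  ∀ x : Fin N → ℂ, IsSparse s x →
    (1 - δ) * l2norm x ^ 2 ≤ l2norm (A.mulVec x) ^ 2 ∧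
      l2norm (A.mulVec x) ^ 2 ≤ (1 + δ) * l2norm x ^ 2

/-- `(xh, ch)` is a minimizer of `‖z‖₁ + lam ‖d‖₁` subject to `‖Az + d - y‖₂ ≤ ε`. -/
def IsMinimizer {m N : ℕ} (A : Matrix (Fin m) (Fin N) ℂ) (y : Fin m → ℂ) (lam ε : ℝ)
    (xh : Fin N → ℂ) (ch : Fin m → ℂ) : Prop :=
  l2norm (A.mulVec xh + ch - y) ≤ ε ∧
    ∀ (z : Fin N → ℂ) (d : Fin m → ℂ), l2norm (A.mulVec z + d - y) ≤ ε →
      l1norm xh + lam * l1norm ch ≤ l1norm z + lam * l1norm d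

/-- Spectral norm of a matrix (operator norm w.r.t. Euclidean norms). -/
noncomputable def specNorm {a b : ℕ} (B : Matrix (Fin a) (Fin b) ℂ) : ℝ :=
  ‖LinearMap.toContinuousLinearMap (Matrix.toEuclideanLin B)‖

/-- `σ_{s,k}(A)`: the maximum spectral norm over `k × s` submatrices of `A`. -/
noncomputable def sigmaSK {m N : ℕ} (A : Matrix (Fin m) (Fin N) ℂ) (s k : ℕ) : ℝ :=
  sSup {t : ℝ | ∃ (S : Finset (Fin N)) (T : Finset (Fin m)) (hS : S.card = s) (hT : T.card = k),
    t = specNorm (A.submatrix (fun i : Fin k => ((T.orderIsoOfFin hT i : Fin m)))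
      (fun j : Fin s => ((S.orderIsoOfFin hS j : Fin N))))}


lemma l1norm_nonneg {n : ℕ} (x : Fin n → ℂ) : 0 ≤ l1norm x :=
  Finset.sum_nonneg fun _ _ => norm_nonneg _

lemma l1_split {n : ℕ} (x : Fin n → ℂ) (S : Finset (Fin n)) :
    l1norm x = l1norm (restr x S) + l1norm (restr x Sᶜ) := by
  unfold l1norm restr
  rw [← Finset.sum_add_distrib]
  apply Finset.sum_congr rfl
  intro i _
  by_cases hi : i ∈ S <;> simp [hi]

lemma l1_add_le {n : ℕ} (a b : Fin n → ℂ) : l1norm (a + b) ≤ l1norm a + l1norm b := by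
  unfold l1norm
  rw [← Finset.sum_add_distrib]
  exact Finset.sum_le_sum fun i _ => norm_add_le _ _

lemma l1_sub_ge {n : ℕ} (a b : Fin n → ℂ) : l1norm a - l1norm b ≤ l1norm (a - b) := by
  have := l1_add_le (a - b) b
  simp only [sub_add_cancel] at this
  linarith

lemma l1_sub_rev {n : ℕ} (a b : Fin n → ℂ) : l1norm (a - b) = l1norm (b - a) := by
  unfold l1norm
  exact Finset.sum_congr rfl fun i _ => norm_sub_rev (a i) (b i)

lemma restr_sub {n : ℕ} (a b : Fin n → ℂ) (S : Finset (Fin n)) :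
    restr (a - b) S = restr a S - restr b S := by
  funext i
  by_cases hi : i ∈ S <;> simp [restr, hi]

lemma l2norm_eq {n : ℕ} (x : Fin n → ℂ) :
    l2norm x = ‖(WithLp.equiv 2 (Fin n → ℂ)).symm x‖ := by
  rw [EuclideanSpace.norm_eq]
  rfl

lemma l2_sub_le {n : ℕ} (a b : Fin n → ℂ) :
    l2norm (a - b) ≤ l2norm a + l2norm b := by
  simp only [l2norm_eq]
  have : (WithLp.equiv 2 (Fin n → ℂ)).symm (a - b)
      = (WithLp.equiv 2 (Fin n → ℂ)).symm a - (WithLp.equiv 2 (Fin n → ℂ)).symm b := rfl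
  rw [this]
  exact norm_sub_le _ _

/-- tail bound for the error of the minimizer under the ℓ¹-robust NSP. -/
theorem tail_bound_of_l1RNSP {N m : ℕ} (s k : ℕ)
    (hs1 : 1 ≤ s) (hsN : s ≤ N) (hk1 : 1 ≤ k) (hkm : k ≤ m)
    (lam : ℝ) (hlam : 0 < lam)
    (A : Matrix (Fin m) (Fin N) ℂ) (ρ τ' : ℝ) (hρ0 : 0 < ρ) (hρ1 : ρ < 1) (hτ : 0 < τ')
    (h : L1RNSP A s k lam ρ τ')
    (x : Fin N → ℂ) (c y : Fin m → ℂ) (ε : ℝ) (hε : 0 < ε)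
    (hfeas : l2norm (A.mulVec x + c - y) ≤ ε)
    (xh : Fin N → ℂ) (ch : Fin m → ℂ) (hmin : IsMinimizer A y lam ε xh ch)
    (S : Finset (Fin N)) (T : Finset (Fin m)) (hS : S.card ≤ s) (hT : T.card ≤ k) :
    l1norm (restr (x - xh) Sᶜ) + lam * l1norm (restr (c - ch) Tᶜ) ≤
      (2 / (1 - ρ)) * (l1norm (restr x Sᶜ) + lam * l1norm (restr c Tᶜ)) +
        (2 * τ' / (1 - ρ)) * ε := by
  set v := x - xh with hv
  set e := c - ch with he
  have h1ρ : 0 < 1 - ρ := by linarith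
  -- residual bound
  have hres : l2norm (A.mulVec v + e) ≤ 2 * ε := by
    have heq : A.mulVec v + e = (A.mulVec x + c - y) - (A.mulVec xh + ch - y) := by
      rw [hv, he, Matrix.mulVec_sub]
      abel
    rw [heq]
    have := l2_sub_le (A.mulVec x + c - y) (A.mulVec xh + ch - y)
    linarith [hmin.1]
  -- NSP applied to (v, e)
  have hnsp := h v e S T hS hT
  have hnsp2 : l1norm (restr v S) + lam * l1norm (restr e T) ≤
      ρ * (l1norm (restr v Sᶜ) + lam * l1norm (restr e Tᶜ)) + τ' * (2 * ε) := by
    have : τ' * l2norm (A.mulVec v + e) ≤ τ' * (2 * ε) :=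
      mul_le_mul_of_nonneg_left hres (le_of_lt hτ)
    linarith
  -- minimality consequence
  have hminle : l1norm xh + lam * l1norm ch ≤ l1norm x + lam * l1norm c :=
    hmin.2 x c hfeas
  -- splits
  have sx := l1_split x S
  have sc := l1_split c T
  have sxh := l1_split xh S
  have sch := l1_split ch T
  -- xh = x - v restrictions
  have hxv : x - v = xh := by rw [hv]; abel
  have hce : c - e = ch := by rw [he]; abel
  have eqS : restr x S - restr v S = restr xh S := by rw [← restr_sub, hxv]
  have eqSc : restr x Sᶜ - restr v Sᶜ = restr xh Sᶜ := by rw [← restr_sub, hxv]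
  have eqT : restr c T - restr e T = restr ch T := by rw [← restr_sub, hce]
  have eqTc : restr c Tᶜ - restr e Tᶜ = restr ch Tᶜ := by rw [← restr_sub, hce]
  have hxh1 : l1norm (restr x S) - l1norm (restr v S) ≤ l1norm (restr xh S) := by
    have := l1_sub_ge (restr x S) (restr v S); rw [eqS] at this; exact this
  have hxh2 : l1norm (restr v Sᶜ) - l1norm (restr x Sᶜ) ≤ l1norm (restr xh Sᶜ) := by
    have := l1_sub_ge (restr v Sᶜ) (restr x Sᶜ)
    rw [l1_sub_rev, eqSc] at this; exact this
  have hch1 : l1norm (restr c T) - l1norm (restr e T) ≤ l1norm (restr ch T) := by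
    have := l1_sub_ge (restr c T) (restr e T); rw [eqT] at this; exact this
  have hch2 : l1norm (restr e Tᶜ) - l1norm (restr c Tᶜ) ≤ l1norm (restr ch Tᶜ) := by
    have := l1_sub_ge (restr e Tᶜ) (restr c Tᶜ)
    rw [l1_sub_rev, eqTc] at this; exact this
  -- cone-type bound
  have hcone : l1norm (restr v Sᶜ) + lam * l1norm (restr e Tᶜ) ≤
      l1norm (restr v S) + lam * l1norm (restr e T) +
        2 * (l1norm (restr x Sᶜ) + lam * l1norm (restr c Tᶜ)) := by
    nlinarith [mul_le_mul_of_nonneg_left hch1 (le_of_lt hlam),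
      mul_le_mul_of_nonneg_left hch2 (le_of_lt hlam)]
  -- combine
  have key : (1 - ρ) * (l1norm (restr v Sᶜ) + lam * l1norm (restr e Tᶜ)) ≤
      2 * (l1norm (restr x Sᶜ) + lam * l1norm (restr c Tᶜ)) + 2 * τ' * ε := by
    nlinarith
  have hfin : l1norm (restr v Sᶜ) + lam * l1norm (restr e Tᶜ) ≤
      (2 * (l1norm (restr x Sᶜ) + lam * l1norm (restr c Tᶜ)) + 2 * τ' * ε) / (1 - ρ) :=
    (le_div_iff₀ h1ρ).mpr (by linarith [key])
  have hrw : (2 / (1 - ρ)) * (l1norm (restr x Sᶜ) + lam * l1norm (restr c Tᶜ)) +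
      (2 * τ' / (1 - ρ)) * ε =
      (2 * (l1norm (restr x Sᶜ) + lam * l1norm (restr c Tᶜ)) + 2 * τ' * ε) / (1 - ρ) := by
    field_simp
  rw [hrw]
  exact hfin
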